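/- Let x be a nonempty finite word of length m over a finite alphabet Σ. The number of words of length m+1 in the set of minimal absent words of the language F_x̃ (the set of factors of the circular word determined by x) is exactly the number of distinct rotations of x, i.e., the cardinality of {x⟨i⟩ : 0 ≤ i < m}. Moreover, m+1 is the maximal length of a word in this set. -/
import Mathlib


/-- The set of factors of the circular word determined by `x`:
the union over `i < |x|` of the sets of factors of the rotations of `x`. -/
def CircFactors {α : Type*} (x : List α) : Set (List α) :=
  {w | ∃ i < x.length, w <:+: x.rotate i}

/-- The set of minimal absent words of a (factorial) language `L`:
words `a·u·b` that are not in `L` while `a·u ∈ L` and `u·b ∈ L`. -/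
def MAWLang {α : Type*} (L : Set (List α)) : Set (List α) :=
  {w | ∃ (a b : α) (u : List α),
    w = a :: (u ++ [b]) ∧ w ∉ L ∧ (a :: u) ∈ L ∧ (u ++ [b]) ∈ L}

private lemma circ_len_le {α : Type*} {x w : List α} (hw : w ∈ CircFactors x) :
    w.length ≤ x.length := by
  obtain ⟨i, _, hinf⟩ := hw
  simpa [List.length_rotate] using hinf.length_le

private lemma circ_full {α : Type*} {x w : List α} (hw : w ∈ CircFactors x)
    (hlen : w.length = x.length) : ∃ i < x.length, w = x.rotate i := by
  obtain ⟨i, hi, hinf⟩ := hw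
  exact ⟨i, hi, hinf.eq_of_length (by simp [hlen])⟩

private lemma rot_mem_circ {α : Type*} (x : List α) (hx : x ≠ []) (i : ℕ) :
    x.rotate i ∈ CircFactors x := by
  refine ⟨i % x.length, Nat.mod_lt _ (List.length_pos_iff.2 hx), ?_⟩
  rw [List.rotate_mod]

private lemma maw_elem {α : Type*} {x y : List α} (hx : x ≠ []) (i : ℕ)
    (hy : y = x.rotate i) : y ++ y.take 1 ∈ MAWLang (CircFactors x) := by
  have hylen : y.length = x.length := by simp [hy]
  have hyne : y ≠ [] := by
    intro h; apply hx; rw [← List.length_eq_zero_iff] at *; omega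
  obtain ⟨a, u, rfl⟩ := List.exists_cons_of_ne_nil hyne
  simp only [List.length_cons] at hylen
  refine ⟨a, a, u, by simp, ?_, ?_, ?_⟩
  · intro h
    have := circ_len_le h
    simp only [List.length_append, List.length_cons, List.length_take] at this
    omega
  · exact hy ▸ rot_mem_circ x hx i
  · have h1 : u ++ [a] = x.rotate (i + 1) := by
      have : (a :: u).rotate 1 = u ++ [a] := by
        rw [List.rotate_cons_succ, List.rotate_zero]
      rw [← this, hy, List.rotate_rotate]
    exact h1 ▸ rot_mem_circ x hx (i + 1)

theorem maw_circ_factors_max_length {α : Type*} [Fintype α] (x : List α) (hx : x ≠ []) :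
    {w ∈ MAWLang (CircFactors x) | w.length = x.length + 1}.ncard =
        {y : List α | ∃ i < x.length, y = x.rotate i}.ncard ∧
      (∀ w ∈ MAWLang (CircFactors x), w.length ≤ x.length + 1) ∧
      (∃ w ∈ MAWLang (CircFactors x), w.length = x.length + 1) := by
  classical
  have hm : 0 < x.length := List.length_pos_iff.2 hx
  set R : Set (List α) := {y : List α | ∃ i < x.length, y = x.rotate i} with hR
  have hRlen : ∀ y ∈ R, y.length = x.length := by
    rintro y ⟨i, _, rfl⟩; simp
  -- the set of long MAWs is the image of R
  have hset : {w ∈ MAWLang (CircFactors x) | w.length = x.length + 1}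
      = (fun y : List α => y ++ y.take 1) '' R := by
    ext w
    constructor
    · rintro ⟨⟨a, b, u, rfl, hnot, hau, hub⟩, hlen⟩
      simp only [List.length_cons, List.length_append, List.length_singleton, List.length_nil] at hlen
      have hau_len : (a :: u).length = x.length := by simp; omega
      have hub_len : (u ++ [b]).length = x.length := by simp; omega
      obtain ⟨i, hi, hieq⟩ := circ_full hau hau_len
      obtain ⟨j, hj, hjeq⟩ := circ_full hub hub_len
      -- a = b since rotations are permutations of x
      have hperm : (a :: u).Perm (u ++ [b]) := by
        rw [hieq, hjeq]
        exact (List.rotate_perm x i).trans (List.rotate_perm x j).symm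
      have hperm2 : (a :: u).Perm (b :: u) :=
        hperm.trans (List.perm_append_singleton b u)
      have hab : a = b := by
        by_contra hne
        have := hperm2.count_eq a
        simp [List.count_cons, hne, Ne.symm hne] at this
      refine ⟨a :: u, ⟨i, hi, hieq⟩, ?_⟩
      simp [hab]
    · rintro ⟨y, ⟨i, hi, hyeq⟩, rfl⟩
      refine ⟨maw_elem hx i hyeq, ?_⟩
      have h1 := hRlen y ⟨i, hi, hyeq⟩
      have hyne : y ≠ [] := by
        intro h; apply hx; rw [← List.length_eq_zero_iff] at *; omega
      simp only [List.length_append, List.length_take, h1]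
      omega
  refine ⟨?_, ?_, ?_⟩
  · rw [hset]
    apply Set.ncard_image_of_injOn
    intro y hy z hz heq
    have hyl := hRlen y hy
    have hzl := hRlen z hz
    exact (List.append_inj heq (by omega)).1
  · rintro w ⟨a, b, u, rfl, hnot, hau, hub⟩
    have := circ_len_le hau
    simp only [List.length_cons, List.length_append, List.length_singleton, List.length_nil] at this ⊢
    omega
  · refine ⟨x ++ x.take 1, maw_elem hx 0 (by simp), ?_⟩
    have hxlen : 1 ≤ x.length := hm
    simp [List.length_take]
    omega
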